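/- Let γ : [1, ∞) → ℝⁿ be a C¹ curve such that |γ(t)| → ∞ as t → ∞, and suppose that both γ(t)/|γ(t)| and γ'(t)/|γ'(t)| converge as t → ∞ (as happens automatically for definable arcs in an o-minimal structure). If moreover γ is parametrized so that |γ(t)| = t for all t, then the two limits coincide: lim γ(t)/|γ(t)| = lim γ'(t)/|γ'(t)|. -/

import Mathlib

open Filter

open scoped RealInnerProductSpace

/-- For a `C¹` curve `γ : [1, ∞) → ℝⁿ` going to infinity, parametrized so that
`‖γ t‖ = t`, if both `γ t / ‖γ t‖` and `γ' t / ‖γ' t‖` converge at infinity, then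
the two limits coincide. -/
theorem stmt_0 (n : ℕ) (γ γ' : ℝ → EuclideanSpace ℝ (Fin n))
    (hderiv : ∀ t, 1 ≤ t → HasDerivAt γ (γ' t) t)
    (hcont : ContinuousOn γ' (Set.Ici (1:ℝ)))
    (hinfty : Tendsto (fun t => ‖γ t‖) atTop atTop)
    (hparam : ∀ t, 1 ≤ t → ‖γ t‖ = t)
    (u v : EuclideanSpace ℝ (Fin n))
    (hu : Tendsto (fun t => ‖γ t‖⁻¹ • γ t) atTop (nhds u))
    (hv : Tendsto (fun t => ‖γ' t‖⁻¹ • γ' t) atTop (nhds v)) :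
    u = v := by
  -- the inner product identity ⟪γ t, γ' t⟫ = t
  have hinner : ∀ t : ℝ, 1 < t → ⟪γ t, γ' t⟫ = t := by
    intro t ht
    have h1 : HasDerivAt (fun s => ⟪γ s, γ s⟫) (⟪γ t, γ' t⟫ + ⟪γ' t, γ t⟫) t :=
      (hderiv t ht.le).inner ℝ (hderiv t ht.le)
    have hsq : HasDerivAt (fun s : ℝ => s ^ 2) (2 * t) t := by
      simpa [mul_comm] using (hasDerivAt_pow 2 t)
    have h2 : HasDerivAt (fun s => ⟪γ s, γ s⟫) (2 * t) t := by
      refine hsq.congr_of_eventuallyEq ?_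
      filter_upwards [eventually_gt_nhds ht] with s hs
      rw [real_inner_self_eq_norm_sq, hparam s hs.le]
    have h3 := h1.unique h2
    have h4 : ⟪γ t, γ' t⟫ = ⟪γ' t, γ t⟫ := real_inner_comm _ _
    linarith
  -- ‖γ' t‖ ≥ 1
  have hγ'one : ∀ t : ℝ, 1 < t → 1 ≤ ‖γ' t‖ := by
    intro t ht
    have hcs : ⟪γ t, γ' t⟫ ≤ ‖γ t‖ * ‖γ' t‖ := real_inner_le_norm _ _
    rw [hinner t ht, hparam t ht.le] at hcs
    nlinarith
  have hγ'pos : ∀ t : ℝ, 1 < t → (0:ℝ) < ‖γ' t‖ := fun t ht => lt_of_lt_of_le one_pos (hγ'one t ht)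
  -- ‖u‖ = 1
  have hu1 : ‖u‖ = 1 := by
    have h1 : Tendsto (fun t => ‖‖γ t‖⁻¹ • γ t‖) atTop (nhds ‖u‖) := hu.norm
    have h2 : (fun t => ‖‖γ t‖⁻¹ • γ t‖) =ᶠ[atTop] (fun _ => (1:ℝ)) := by
      filter_upwards [eventually_gt_atTop (1:ℝ)] with t ht
      have hpos : (0:ℝ) < ‖γ t‖ := by rw [hparam t ht.le]; linarith
      rw [norm_smul, norm_inv, norm_norm, inv_mul_cancel₀ hpos.ne']
    exact tendsto_nhds_unique (h1.congr' h2) tendsto_const_nhds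
  have hv1 : ‖v‖ = 1 := by
    have h1 : Tendsto (fun t => ‖‖γ' t‖⁻¹ • γ' t‖) atTop (nhds ‖v‖) := hv.norm
    have h2 : (fun t => ‖‖γ' t‖⁻¹ • γ' t‖) =ᶠ[atTop] (fun _ => (1:ℝ)) := by
      filter_upwards [eventually_gt_atTop (1:ℝ)] with t ht
      rw [norm_smul, norm_inv, norm_norm, inv_mul_cancel₀ (hγ'pos t ht).ne']
    exact tendsto_nhds_unique (h1.congr' h2) tendsto_const_nhds
  -- ‖γ' t‖⁻¹ → ⟪u, v⟫ =: c
  set c : ℝ := ⟪u, v⟫ with hc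
  have hcv : Tendsto (fun t => ‖γ' t‖⁻¹) atTop (nhds c) := by
    have h1 : Tendsto (fun t => ⟪‖γ t‖⁻¹ • γ t, ‖γ' t‖⁻¹ • γ' t⟫) atTop (nhds c) :=
      hu.inner hv
    refine h1.congr' ?_
    filter_upwards [eventually_gt_atTop (1:ℝ)] with t ht
    rw [real_inner_smul_left, real_inner_smul_right, hinner t ht, hparam t ht.le]
    field_simp
  -- c ≤ 1
  have hcle : c ≤ 1 := by
    refine le_of_tendsto hcv ?_
    filter_upwards [eventually_gt_atTop (1:ℝ)] with t ht
    rw [inv_le_one_iff₀]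
    right; exact hγ'one t ht
  -- main claim: c = 1
  have hceq : c = 1 := by
    by_contra hne
    have hclt : c < 1 := lt_of_le_of_ne hcle hne
    set M : ℝ := 2 / (c + 1) with hM
    have hcnn : 0 ≤ c := by
      refine ge_of_tendsto hcv ?_
      filter_upwards [eventually_gt_atTop (1:ℝ)] with t ht
      positivity
    have hM1 : 1 < M := by
      rw [hM, lt_div_iff₀ (by linarith)]; linarith
    set ε : ℝ := (M - 1) / (2 * M) with hε
    have hεpos : 0 < ε := by rw [hε]; apply div_pos <;> linarith
    have hε1 : ε < 1 := by
      rw [hε, div_lt_one (by positivity)]; linarith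
    set K : ℝ := (M + 1) / 2 with hK
    have hK1 : 1 < K := by rw [hK]; linarith
    have hMε : K ≤ M * (1 - ε) := by
      rw [hK, hε]
      have : M * ((M - 1) / (2 * M)) = (M - 1) / 2 := by
        field_simp
      nlinarith [this]
    -- eventual bounds
    have hb1 : ∀ᶠ t in atTop, ‖γ' t‖⁻¹ < (c + 1) / 2 := by
      refine hcv.eventually (eventually_lt_nhds ?_)
      linarith
    have hb2 : ∀ᶠ t in atTop, 1 - ε < ⟪‖γ' t‖⁻¹ • γ' t, v⟫ := by
      have h1 : Tendsto (fun t => ⟪‖γ' t‖⁻¹ • γ' t, v⟫) atTop (nhds (1:ℝ)) := by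
        have : Tendsto (fun t => ⟪‖γ' t‖⁻¹ • γ' t, v⟫) atTop (nhds ⟪v, v⟫) :=
          hv.inner tendsto_const_nhds
        rwa [real_inner_self_eq_norm_sq, hv1, one_pow] at this
      refine h1.eventually (eventually_gt_nhds ?_)
      linarith
    obtain ⟨T, hT⟩ := ((hb1.and hb2).and (eventually_gt_atTop (1:ℝ))).exists_forall_of_atTop
    -- derivative bound for t ≥ T : ⟪γ' t, v⟫ ≥ K
    have hdb : ∀ t : ℝ, T ≤ t → K ≤ ⟪γ' t, v⟫ := by
      intro t ht
      obtain ⟨⟨h1, h2⟩, h3⟩ := hT t ht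
      have hpos := hγ'pos t h3
      have hMle : M ≤ ‖γ' t‖ := by
        rw [hM, div_le_iff₀ (by linarith)]
        rw [inv_lt_iff_one_lt_mul₀ hpos] at h1
        nlinarith
      have heq : ⟪γ' t, v⟫ = ‖γ' t‖ * ⟪‖γ' t‖⁻¹ • γ' t, v⟫ := by
        rw [real_inner_smul_left]; field_simp
      rw [heq]
      calc K ≤ M * (1 - ε) := hMε
        _ ≤ ‖γ' t‖ * ⟪‖γ' t‖⁻¹ • γ' t, v⟫ := by
            apply mul_le_mul hMle h2.le (by linarith) (by positivity)
    -- monotonicity of g t = ⟪γ t, v⟫ - K * t on [T', ∞)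
    set T' : ℝ := max T 2 with hT'
    have hT'1 : (1:ℝ) < T' := lt_of_lt_of_le one_lt_two (le_max_right _ _)
    set g : ℝ → ℝ := fun t => ⟪γ t, v⟫ - K * t with hg
    have hgd : ∀ t : ℝ, T' ≤ t → HasDerivAt g (⟪γ' t, v⟫ - K) t := by
      intro t ht
      have h1 : HasDerivAt (fun s => ⟪γ s, v⟫) (⟪γ' t, v⟫) t := by
        have := (hderiv t (le_trans hT'1.le ht)).inner ℝ (hasDerivAt_const t v)
        simpa using this
      have h := h1.sub ((hasDerivAt_id t).const_mul K)
      rw [mul_one] at h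
      exact h
    have hmono : MonotoneOn g (Set.Ici T') := by
      apply monotoneOn_of_deriv_nonneg (convex_Ici T')
      · intro t ht
        exact ((hgd t ht).continuousAt).continuousWithinAt
      · intro t ht
        rw [interior_Ici] at ht
        exact (hgd t (le_of_lt ht)).differentiableAt.differentiableWithinAt
      · intro t ht
        rw [interior_Ici] at ht
        rw [(hgd t (le_of_lt ht)).deriv]
        have := hdb t (le_trans (le_max_left _ _) (le_of_lt ht))
        linarith
    have hub : ∀ t : ℝ, T' ≤ t → g t ≤ (1 - K) * t := by
      intro t ht
      have h1 : ⟪γ t, v⟫ ≤ ‖γ t‖ * ‖v‖ := real_inner_le_norm _ _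
      rw [hparam t (le_trans hT'1.le ht), hv1, mul_one] at h1
      simp only [hg]; nlinarith
    set t₀ : ℝ := max T' ((|g T'| + 1) / (K - 1)) with ht₀
    have h1 : T' ≤ t₀ := le_max_left _ _
    have h2 : g T' ≤ g t₀ := hmono Set.self_mem_Ici (Set.mem_Ici.mpr h1) h1
    have h3 := hub t₀ h1
    have h4 : (|g T'| + 1) / (K - 1) ≤ t₀ := le_max_right _ _
    rw [div_le_iff₀ (by linarith)] at h4
    have h5 : -|g T'| ≤ g T' := neg_abs_le _
    nlinarith
  -- conclude
  exact (inner_eq_one_iff_of_norm_eq_one hu1 hv1).mp hceq
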